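/- arXiv:math/0109147 — 2 statements merged into one kernel-verified Lean document; each statement's English description precedes it below -/
import Mathlib

section
/- Suppose α̃ = γ̃·0·(a)·β·0·0·⋯ where a > 0, β is a standard composition, and γ̃ is a generalized composition. If the generalized composition γ̃·(a-1)·β·0·⋯ reaches level e, then α̃ reaches level e. -/
/-- A generalized composition, given by a finite list of nonnegative parts (followed by
zeros), reaches level `e` if some prefix of length `k ≥ 1` has sum at least `k + e`.
(`l.take k` is the whole of `l` for `k > l.length`, which correctly accounts for the
tail of zeros.) -/
def listReaches (l : List ℕ) (e : ℕ) : Prop :=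
  ∃ k : ℕ, 0 < k ∧ k + e ≤ (l.take k).sum

/-- Suppose `α̃ = γ̃·0·a·β·0·0·⋯` where `a > 0`, `β` is a standard composition and `γ̃`
is a generalized composition.  If `γ̃·(a-1)·β·0·⋯` reaches level `e`, then `α̃` reaches
level `e`. -/
theorem reaches_of_insert_zero (e a : ℕ) (γ β : List ℕ) (ha : 0 < a)
    (hβ : ∀ x ∈ β, 0 < x) (h : listReaches (γ ++ (a - 1) :: β) e) :
    listReaches (γ ++ 0 :: a :: β) e := by
  obtain ⟨k, hk, hsum⟩ := h
  by_cases hle : k ≤ γ.length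
  · refine ⟨k, hk, ?_⟩
    rw [List.take_append_of_le_length hle] at hsum ⊢
    exact hsum
  · push_neg at hle
    obtain ⟨m, rfl⟩ : ∃ m, k = γ.length + (1 + m) := ⟨k - γ.length - 1, by omega⟩
    refine ⟨γ.length + (2 + m), by omega, ?_⟩
    rw [List.take_length_add_append] at hsum ⊢
    simp only [List.take_succ_cons, List.sum_append, List.sum_cons,
      show (1 + m) = m + 1 from by omega, show (2 + m) = (m + 1) + 1 from by omega] at hsum ⊢
    omega
end

section
/- With G_α̃ defined as in the recursive construction, for every generalized composition α̃ = b·ρ̃ with b > 0 there exists a formal power series M_α̃ in the variables x₂,x₃,... (not involving x₁) such that G_α̃ = x₁·G_{(b-1)·ρ̃} + M_α̃(x₂,x₃,...). -/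
/-- Descent set of a composition (list of positive parts): partial sums. -/
def descents (l : List ℕ) : Finset ℕ :=
  (Finset.Ioo 0 l.length).image (fun k => (l.take k).sum)

/-- The fundamental quasi-symmetric function of degree `d` with descent set `D`
(variable `xᵢ` is `X (i-1)`). -/
noncomputable def Fqs (d : ℕ) (D : Finset ℕ) : MvPowerSeries ℕ ℚ :=
  fun e => (Nat.card {j : Fin d → ℕ // Monotone j ∧
    (∀ a b : Fin d, (a : ℕ) + 1 = (b : ℕ) → (a : ℕ) + 1 ∈ D → j a < j b) ∧
    ∀ s : ℕ, e s = (Finset.univ.filter fun i => j i = s).card} : ℚ)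

/-- Strip the trailing zeros of a generalized composition (finite list of parts). -/
def strip (l : List ℕ) : List ℕ := (l.reverse.dropWhile (· == 0)).reverse

/-- Fuel-driven version of the recursive definition of `G`.  After stripping trailing
zeros: if the result `ν` is a standard composition, `G = F_ν`; otherwise write
`ν = γ ++ [0] ++ τ` where `τ = a :: β` is the maximal zero-free (standard) suffix, and
`G_{γ·0·a·β} = G_{γ·a·β} - x_{ℓ(γ)+1} · G_{γ·(a-1)·β}` (note `x_{k}` is `X (k-1)`).
The fuel (an upper bound for the stripped length, which strictly decreases) makes the
recursion structural. -/
noncomputable def Gaux : ℕ → List ℕ → MvPowerSeries ℕ ℚ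
  | 0, l => Fqs (strip l).sum (descents (strip l))
  | (fuel + 1), l =>
      let l' := strip l
      if 0 ∈ l' then
        let r := l'.reverse
        let τ := (r.takeWhile (· != 0)).reverse
        let γ := ((r.dropWhile (· != 0)).tail).reverse
        Gaux fuel (γ ++ τ) -
          MvPowerSeries.X γ.length * Gaux fuel (γ ++ (τ.headI - 1) :: τ.tail)
      else Fqs l'.sum (descents l')

/-- The function `G_{α̃}` of a generalized composition `α̃` (finite list of parts,
extended by zeros), defined recursively from fundamental quasi-symmetric functions:
`G_{0,0,…} = 1`; `G_{ν·0·0⋯} = F_ν` for `ν` standard; and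
`G_{γ̃·0·a·β·0⋯} = G_{γ̃·a·β·0⋯} - x_{ℓ(γ̃)+1}·G_{γ̃·(a-1)·β·0⋯}` for `a > 0`, `β`
standard. -/
noncomputable def G (l : List ℕ) : MvPowerSeries ℕ ℚ := Gaux (strip l).length l


section Helpers

open MvPowerSeries

/-! ### List lemmas about `strip` -/

lemma dropWhile_append_of_mem {p : ℕ → Bool} {l1 l2 : List ℕ} (h : ∃ x ∈ l1, ¬ p x) :
    (l1 ++ l2).dropWhile p = l1.dropWhile p ++ l2 := by
  induction l1 with
  | nil => simp at h
  | cons a t ih =>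
      by_cases ha : p a
      · simp only [List.cons_append, List.dropWhile_cons, ha, if_true]
        exact ih (by rcases h with ⟨x, hx, hpx⟩
                     rcases List.mem_cons.mp hx with hh | hh
                     · exact absurd ha (hh ▸ hpx)
                     · exact ⟨x, hh, hpx⟩)
      · simp [List.dropWhile_cons, ha]

lemma takeWhile_append_of_mem {p : ℕ → Bool} {l1 l2 : List ℕ} (h : ∃ x ∈ l1, ¬ p x) :
    (l1 ++ l2).takeWhile p = l1.takeWhile p := by
  induction l1 with
  | nil => simp at h
  | cons a t ih =>
      by_cases ha : p a
      · simp only [List.cons_append, List.takeWhile_cons, ha, if_true]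
        rw [ih (by rcases h with ⟨x, hx, hpx⟩
                   rcases List.mem_cons.mp hx with hh | hh
                   · exact absurd ha (hh ▸ hpx)
                   · exact ⟨x, hh, hpx⟩)]
      · simp [List.takeWhile_cons, ha]

lemma strip_cons_pos {b : ℕ} (hb : b ≠ 0) (l : List ℕ) : strip (b :: l) = b :: strip l := by
  unfold strip
  rcases eq_or_ne (l.reverse.dropWhile (· == 0)) [] with h | h
  · rw [List.reverse_cons, List.dropWhile_append]
    simp [h, hb]
  · rw [List.reverse_cons, List.dropWhile_append]
    simp [h, hb]

lemma strip_of_not_mem {l : List ℕ} (h : 0 ∉ l) : strip l = l := by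
  unfold strip
  rw [List.dropWhile_eq_self_iff.mpr, List.reverse_reverse]
  intro hl
  have hm : l.reverse.get ⟨0, hl⟩ ∈ l := by
    have := List.get_mem l.reverse ⟨0, hl⟩
    simpa using this
  simp only [beq_iff_eq]
  exact fun h0 => h (h0 ▸ hm)

lemma strip_idem (l : List ℕ) : strip (strip l) = strip l := by
  unfold strip
  rw [List.reverse_reverse, List.dropWhile_idempotent]

lemma strip_length_le (l : List ℕ) : (strip l).length ≤ l.length := by
  unfold strip
  simpa using (List.dropWhile_sublist (l := l.reverse) (· == 0)).length_le

lemma strip_cons_strip (c : ℕ) (l : List ℕ) : strip (c :: l) = strip (c :: strip l) := by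
  unfold strip
  simp only [List.reverse_cons, List.reverse_reverse]
  rcases eq_or_ne (l.reverse.dropWhile (· == 0)) [] with h | h
  · rw [List.dropWhile_append, List.dropWhile_append]; simp [h]
  · rw [dropWhile_append_of_mem, dropWhile_append_of_mem, List.dropWhile_idempotent]
    · refine ⟨(l.reverse.dropWhile (· == 0)).head h, List.head_mem h, ?_⟩
      simpa using List.head_dropWhile_not (· == 0) (l := l.reverse) h
    · refine ⟨(l.reverse.dropWhile (· == 0)).head h,
        List.dropWhile_subset _ (List.head_mem h), ?_⟩
      simpa using List.head_dropWhile_not (· == 0) (l := l.reverse) h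

lemma strip_cons_of_stripped {μ : List ℕ} (hst : strip μ = μ) (hne : μ ≠ []) (c : ℕ) :
    strip (c :: μ) = c :: μ := by
  have hrev : μ.reverse.dropWhile (· == 0) = μ.reverse := by
    have := congrArg List.reverse hst
    rw [strip, List.reverse_reverse] at this
    exact this
  have hr : μ.reverse ≠ [] := by simpa using hne
  have hhead : ¬ ((μ.reverse.head hr == 0) = true) := by
    rw [List.dropWhile_eq_self_iff] at hrev
    have h2 := hrev (by simpa using List.length_pos_iff.mpr hr)
    rw [List.head_eq_getElem_zero hr]
    simpa using h2
  unfold strip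
  rw [List.reverse_cons, dropWhile_append_of_mem ⟨μ.reverse.head hr, List.head_mem hr, hhead⟩,
    hrev]
  simp

lemma decomp_unique {γ₁ τ₁ γ₂ τ₂ : List ℕ} (h : γ₁ ++ 0 :: τ₁ = γ₂ ++ 0 :: τ₂)
    (h₁ : 0 ∉ τ₁) (h₂ : 0 ∉ τ₂) : γ₁ = γ₂ ∧ τ₁ = τ₂ := by
  have key : ∀ γ τ : List ℕ, 0 ∉ τ →
      ((γ ++ 0 :: τ).reverse).takeWhile (· != 0) = τ.reverse := by
    intro γ τ hτ
    rw [show (γ ++ 0 :: τ).reverse = τ.reverse ++ 0 :: γ.reverse by simp]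
    rw [List.takeWhile_append_of_pos, List.takeWhile_cons_of_neg (by simp)]
    · simp
    · intro a ha
      have : a ∈ τ := List.mem_reverse.mp ha
      simp only [bne_iff_ne, ne_eq]
      exact fun h0 => hτ (h0 ▸ this)
  have hτ : τ₁ = τ₂ := by
    have := (key γ₁ τ₁ h₁).symm.trans ((congrArg _ (congrArg List.reverse h)).trans (key γ₂ τ₂ h₂))
    simpa using this
  subst hτ
  exact ⟨List.append_cancel_right h, rfl⟩

/-! ### Basic lemmas about `Gaux` and `G` -/

lemma Gaux_congr {l m : List ℕ} (h : strip l = strip m) (f : ℕ) : Gaux f l = Gaux f m := by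
  cases f with
  | zero => simp only [Gaux, h]
  | succ f => simp only [Gaux, h]

lemma Gaux_of_not_mem {l : List ℕ} (h : 0 ∉ strip l) (f : ℕ) :
    Gaux f l = Fqs (strip l).sum (descents (strip l)) := by
  cases f with
  | zero => rfl
  | succ f => simp only [Gaux, if_neg h]

lemma Gaux_unfold_zero' {ν : List ℕ} (hst : strip ν = ν) (h0 : 0 ∈ ν) :
    ∃ γ τ : List ℕ, ν = γ ++ 0 :: τ ∧ 0 ∉ τ ∧ τ ≠ [] ∧
      ∀ fuel (l : List ℕ), strip l = ν →
        Gaux (fuel + 1) l = Gaux fuel (γ ++ τ) -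
          MvPowerSeries.X γ.length * Gaux fuel (γ ++ (τ.headI - 1) :: τ.tail) := by
  classical
  have hne : ν ≠ [] := by rintro rfl; simp at h0
  have hr0 : (0 : ℕ) ∈ ν.reverse := by simpa using h0
  set d := ν.reverse.dropWhile (· != 0) with hd
  have hdne : d ≠ [] := by
    intro hdnil
    rw [List.dropWhile_eq_nil_iff] at hdnil
    exact absurd (hdnil 0 hr0) (by simp)
  have hdhead : d.head hdne = 0 := by
    have := List.head_dropWhile_not (· != 0) (l := ν.reverse) hdne
    simpa using this
  have hdd : d = 0 :: d.tail := by
    conv_lhs => rw [← List.cons_head_tail hdne, hdhead]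
  have hsplit : ν.reverse.takeWhile (· != 0) ++ d = ν.reverse :=
    List.takeWhile_append_dropWhile
  refine ⟨d.tail.reverse, (ν.reverse.takeWhile (· != 0)).reverse, ?_, ?_, ?_, ?_⟩
  · have := congrArg List.reverse hsplit
    rw [List.reverse_append, List.reverse_reverse] at this
    conv_lhs => rw [← this]
    rw [hdd]
    simp
  · intro hmem
    have := List.mem_takeWhile_imp (List.mem_reverse.mp hmem)
    simp at this
  · intro hτ
    have hτ' : ν.reverse.takeWhile (· != 0) = [] := by simpa using hτ
    have hμr : ν.reverse = 0 :: d.tail := by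
      rw [← hsplit, hτ', List.nil_append]; exact hdd
    have hrev : ν.reverse.dropWhile (· == 0) = ν.reverse := by
      have h2 := congrArg List.reverse hst
      rw [strip, List.reverse_reverse] at h2
      exact h2
    rw [hμr, List.dropWhile_cons_of_pos (by simp)] at hrev
    have hlen := congrArg List.length hrev
    have hle := (List.dropWhile_sublist (l := d.tail) (· == 0)).length_le
    simp only [List.length_cons] at hlen
    omega
  · intro fuel l hl
    simp only [Gaux]
    rw [hl, if_pos h0]

lemma Gaux_unfold_cons {c : ℕ} {μ : List ℕ} (hst : strip μ = μ) (h0 : 0 ∈ μ) :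
    ∃ γ' τ : List ℕ, μ = γ' ++ 0 :: τ ∧ 0 ∉ τ ∧ τ ≠ [] ∧
      ∀ fuel (l : List ℕ), strip l = c :: μ →
        Gaux (fuel + 1) l = Gaux fuel (c :: (γ' ++ τ)) -
          MvPowerSeries.X (γ'.length + 1) *
            Gaux fuel (c :: (γ' ++ (τ.headI - 1) :: τ.tail)) := by
  have hne : μ ≠ [] := by rintro rfl; simp at h0
  have hstc : strip (c :: μ) = c :: μ := strip_cons_of_stripped hst hne c
  obtain ⟨γ, τ, hdec, hτ0, hτne, hG⟩ :=
    Gaux_unfold_zero' hstc (List.mem_cons_of_mem _ h0)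
  match γ, hdec with
  | [], hdec =>
      exfalso
      simp only [List.nil_append] at hdec
      rw [List.cons_eq_cons] at hdec
      exact hτ0 (hdec.2 ▸ h0)
  | (c' :: γ'), hdec =>
      rw [List.cons_append, List.cons_eq_cons] at hdec
      obtain ⟨rfl, hdec⟩ := hdec
      exact ⟨γ', τ, hdec, hτ0, hτne, fun fuel l hl => by
        simpa using hG fuel l hl⟩

lemma Gaux_succ : ∀ f (l : List ℕ), (strip l).length ≤ f → Gaux (f + 1) l = Gaux f l := by
  intro f
  induction f with
  | zero =>
      intro l hl
      have : strip l = [] := List.length_eq_zero_iff.mp (Nat.le_zero.mp hl)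
      rw [Gaux_of_not_mem (by simp [this]), Gaux_of_not_mem (by simp [this])]
  | succ f ih =>
      intro l hl
      by_cases h0 : 0 ∈ strip l
      · obtain ⟨γ, τ, hdec, hτ0, hτne, hG⟩ := Gaux_unfold_zero' (strip_idem l) h0
        have hlen : γ.length + τ.length + 1 = (strip l).length := by
          rw [hdec]; simp; omega
        have h1 : (strip (γ ++ τ)).length ≤ f := by
          have := (strip_length_le (γ ++ τ)).trans
            (by simp : (γ ++ τ).length ≤ γ.length + τ.length)
          omega
        have h2 : (strip (γ ++ (τ.headI - 1) :: τ.tail)).length ≤ f := by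
          have hτlen : ((τ.headI - 1) :: τ.tail).length = τ.length := by
            cases τ with
            | nil => exact absurd rfl hτne
            | cons a t => rfl
          have := (strip_length_le (γ ++ (τ.headI - 1) :: τ.tail)).trans
            (by simp [hτlen] : (γ ++ (τ.headI - 1) :: τ.tail).length ≤ γ.length + τ.length)
          omega
        rw [hG (f + 1) l rfl, hG f l rfl, ih _ h1, ih _ h2]
      · rw [Gaux_of_not_mem h0, Gaux_of_not_mem h0]

lemma Gaux_eq_G {f : ℕ} {l : List ℕ} (h : (strip l).length ≤ f) : Gaux f l = G l := by
  unfold G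
  obtain ⟨k, rfl⟩ := Nat.exists_eq_add_of_le h
  clear h
  induction k with
  | zero => rfl
  | succ k ih =>
      rw [← ih, ← Gaux_succ ((strip l).length + k) l (by omega), Nat.add_succ]

lemma G_congr {l m : List ℕ} (h : strip l = strip m) : G l = G m := by
  unfold G
  rw [h, Gaux_congr h]

/-! ### Counting lemmas for coefficients of `Fqs` -/

lemma fiber_split {d : ℕ} (j : Fin (d + 1) → ℕ) (s : ℕ) :
    (Finset.univ.filter fun i => j i = s).card =
      (if j 0 = s then 1 else 0) +
        (Finset.univ.filter fun i : Fin d => j i.succ = s).card := by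
  classical
  rw [Finset.card_filter, Finset.card_filter, Fin.sum_univ_succ]

lemma j_zero_eq_zero {d : ℕ} {e : ℕ →₀ ℕ} {j : Fin (d + 1) → ℕ} (hm : Monotone j)
    (hf : ∀ s : ℕ, e s = (Finset.univ.filter fun i => j i = s).card) (he : 0 < e 0) :
    j 0 = 0 := by
  classical
  have : (Finset.univ.filter fun i => j i = 0).Nonempty := by
    rw [← Finset.card_pos, ← hf 0]; exact he
  obtain ⟨i, hi⟩ := this
  have := (Finset.mem_filter.mp hi).2
  exact Nat.le_antisymm (by have := hm (Fin.zero_le i); omega) (Nat.zero_le _)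

def Pcond (d : ℕ) (D : Finset ℕ) (e : ℕ →₀ ℕ) (j : Fin d → ℕ) : Prop :=
  Monotone j ∧
    (∀ a b : Fin d, (a : ℕ) + 1 = (b : ℕ) → (a : ℕ) + 1 ∈ D → j a < j b) ∧
    ∀ s : ℕ, e s = (Finset.univ.filter fun i => j i = s).card

lemma card_shift (d : ℕ) (D D' : Finset ℕ) (hD : ∀ p : ℕ, p + 2 ∈ D ↔ p + 1 ∈ D')
    (e : ℕ →₀ ℕ) (he : 0 < e 0) (h1 : 1 ∈ D → e 0 = 1) :
    Nat.card {j : Fin (d + 1) → ℕ // Pcond (d + 1) D e j} =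
      Nat.card {j : Fin d → ℕ // Pcond d D' (e - Finsupp.single 0 1) j} := by
  classical
  apply Nat.card_congr
  refine
    { toFun := fun ⟨j, hm, hd, hf⟩ => ⟨j ∘ Fin.succ, ?_, ?_, ?_⟩
      invFun := fun ⟨j, hm, hd, hf⟩ => ⟨Fin.cases 0 j, ?_, ?_, ?_⟩
      left_inv := ?_
      right_inv := ?_ }
  · exact hm.comp (Fin.strictMono_succ).monotone
  · intro a b hab hmem
    exact hd a.succ b.succ (by simp [Fin.val_succ]; omega)
      (by rw [Fin.val_succ]; exact (hD a).mpr hmem)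
  · intro s
    have h0 : j 0 = 0 := j_zero_eq_zero hm hf he
    have := hf s
    rw [fiber_split j s, h0] at this
    rw [Finsupp.tsub_apply, Finsupp.single_apply, this]
    by_cases hs : s = 0 <;> simp [hs, eq_comm]
  · intro a b hab
    induction a using Fin.cases with
    | zero => simp only [Fin.cases_zero]; exact Nat.zero_le _
    | succ a =>
        induction b using Fin.cases with
        | zero => exact absurd hab (by simp [Fin.le_def])
        | succ b =>
            simp only [Fin.cases_succ]
            exact hm (by rwa [Fin.succ_le_succ_iff] at hab)
  · intro a b hab hmem
    induction a using Fin.cases with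
    | zero =>
        simp only [Fin.val_zero, Nat.zero_add] at hab hmem
        have he0 : ((e - Finsupp.single 0 1 : ℕ →₀ ℕ)) 0 = 0 := by
          rw [Finsupp.tsub_apply, Finsupp.single_apply, h1 hmem]; simp
        have hzero : ∀ i : Fin d, j i ≠ 0 := by
          intro i hi
          have := hf 0
          rw [he0] at this
          have : i ∈ Finset.univ.filter fun i : Fin d => j i = 0 := by
            simp [hi]
          rw [Finset.card_eq_zero.mp
            (by omega : (Finset.univ.filter fun i : Fin d => j i = 0).card = 0)] at this
          simp at this
        induction b using Fin.cases with
        | zero => simp at hab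
        | succ b =>
            simp only [Fin.cases_zero, Fin.cases_succ]
            exact Nat.pos_of_ne_zero (hzero b)
    | succ a =>
        induction b using Fin.cases with
        | zero => simp [Fin.val_succ] at hab
        | succ b =>
            simp only [Fin.cases_succ]
            simp only [Fin.val_succ] at hab hmem
            exact hd a b (by omega)
              ((hD (a : ℕ)).mp (by rwa [show (a:ℕ)+2 = (a:ℕ)+1+1 by omega]))
  · intro s
    have key : (Finset.univ.filter fun i : Fin d => (Fin.cases 0 j : Fin (d + 1) → ℕ) i.succ = s).card =
        (e - Finsupp.single 0 1 : ℕ →₀ ℕ) s := by rw [hf s]; rfl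
    rw [fiber_split (Fin.cases 0 j) s, key, Fin.cases_zero, Finsupp.tsub_apply, Finsupp.single_apply]
    by_cases hs : s = 0
    · subst hs; simp; omega
    · simp [hs, Ne.symm hs]
  · rintro ⟨j, hm, hd, hf⟩
    ext i
    induction i using Fin.cases with
    | zero => simp [(j_zero_eq_zero hm hf he).symm]
    | succ i => simp
  · rintro ⟨j, hm, hd, hf⟩
    ext i
    simp

lemma card_zero (d : ℕ) (D : Finset ℕ) (e : ℕ →₀ ℕ) (h1 : 1 ∈ D) (he : 2 ≤ e 0) :
    Nat.card {j : Fin (d + 1) → ℕ // Pcond (d + 1) D e j} = 0 := by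
  classical
  rw [Nat.card_eq_zero]
  left
  refine ⟨fun ⟨j, hm, hd, hf⟩ => ?_⟩
  have hcard : 2 ≤ (Finset.univ.filter fun i => j i = 0).card := by rw [← hf 0]; exact he
  obtain ⟨x, hx, y, hy, hxy⟩ := Finset.one_lt_card.mp hcard
  have hx0 : j x = 0 := (Finset.mem_filter.mp hx).2
  have hy0 : j y = 0 := (Finset.mem_filter.mp hy).2
  have hz : ∃ z : Fin (d + 1), 1 ≤ (z : ℕ) ∧ j z = 0 := by
    rcases lt_or_gt_of_ne hxy with h | h
    · exact ⟨y, by have := Fin.lt_def.mp h; omega, hy0⟩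
    · exact ⟨x, by have := Fin.lt_def.mp h; omega, hx0⟩
  obtain ⟨z, hz1, hz0⟩ := hz
  have hd1 : 1 < d + 1 := lt_of_le_of_lt hz1 z.isLt
  have h01 : j 0 < j ⟨1, hd1⟩ := hd 0 ⟨1, hd1⟩ (by simp) (by simpa using h1)
  have h1z : j ⟨1, hd1⟩ ≤ j z := hm (by rw [Fin.le_def]; simpa using hz1)
  omega

lemma coeff_Fqs (d : ℕ) (D : Finset ℕ) (e : ℕ →₀ ℕ) :
    MvPowerSeries.coeff e (Fqs d D) =
      (Nat.card {j : Fin d → ℕ // Pcond d D e j} : ℚ) := by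
  rw [MvPowerSeries.coeff_apply]
  rfl

lemma coeff_Fqs_shift (d : ℕ) (D D' : Finset ℕ) (hD : ∀ p : ℕ, p + 2 ∈ D ↔ p + 1 ∈ D')
    (e : ℕ →₀ ℕ) (he : 0 < e 0) (h1 : 1 ∈ D → e 0 = 1) :
    MvPowerSeries.coeff e (Fqs (d + 1) D) =
      MvPowerSeries.coeff (e - Finsupp.single 0 1) (Fqs d D') := by
  rw [coeff_Fqs, coeff_Fqs, card_shift d D D' hD e he h1]

lemma coeff_Fqs_zero (d : ℕ) (D : Finset ℕ) (e : ℕ →₀ ℕ) (h1 : 1 ∈ D) (he : 2 ≤ e 0) :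
    MvPowerSeries.coeff e (Fqs (d + 1) D) = 0 := by
  rw [coeff_Fqs, card_zero d D e h1 he]
  simp

/-! ### Descents lemmas -/

lemma mem_descents {q : ℕ} {μ : List ℕ} :
    q ∈ descents μ ↔ ∃ k, 0 < k ∧ k < μ.length ∧ (μ.take k).sum = q := by
  simp [descents, Finset.mem_image, Finset.mem_Ioo, and_assoc]

lemma mem_descents_cons {c q : ℕ} {μ : List ℕ} :
    q ∈ descents (c :: μ) ↔ ∃ k < μ.length, c + (μ.take k).sum = q := by
  rw [mem_descents]
  constructor
  · rintro ⟨k, hk0, hkm, hs⟩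
    refine ⟨k - 1, by simp only [List.length_cons] at hkm; omega, ?_⟩
    obtain ⟨k', rfl⟩ := Nat.exists_eq_add_of_le hk0
    rw [Nat.add_comm 1 k', List.take_succ_cons, List.sum_cons] at hs
    simpa using hs
  · rintro ⟨k, hk, hs⟩
    exact ⟨k + 1, Nat.succ_pos k, by simp only [List.length_cons]; omega,
      by simpa [List.take_succ_cons] using hs⟩

lemma coeff_X_mul' (s : ℕ) (f : MvPowerSeries ℕ ℚ) (e : ℕ →₀ ℕ) :
    MvPowerSeries.coeff e (MvPowerSeries.X s * f) =
      if 0 < e s then MvPowerSeries.coeff (e - Finsupp.single s 1) f else 0 := by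
  rw [show (MvPowerSeries.X s : MvPowerSeries ℕ ℚ) = MvPowerSeries.monomial
      (Finsupp.single s 1) 1 from rfl,
    MvPowerSeries.coeff_monomial_mul]
  by_cases h : Finsupp.single s 1 ≤ e
  · rw [if_pos h, if_pos (by have := Finsupp.single_le_iff.mp h; omega), one_mul]
  · rw [if_neg h, if_neg (by
      intro hlt
      exact h (Finsupp.single_le_iff.mpr hlt))]

end Helpers

lemma sub_single_apply (x : ℕ →₀ ℕ) {i j : ℕ} (h : i ≠ j) :
    ((x - Finsupp.single i 1 : ℕ →₀ ℕ)) j = x j := by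
  rw [Finsupp.tsub_apply, Finsupp.single_apply, if_neg h, Nat.sub_zero]

lemma sub_single_apply_self (x : ℕ →₀ ℕ) (i : ℕ) :
    ((x - Finsupp.single i 1 : ℕ →₀ ℕ)) i = x i - 1 := by
  rw [Finsupp.tsub_apply, Finsupp.single_apply, if_pos rfl]

lemma key_shift : ∀ n (b : ℕ) (ρ : List ℕ), 0 < b → (strip (b :: ρ)).length ≤ n →
    ∀ e : ℕ →₀ ℕ, 0 < e 0 →
      MvPowerSeries.coeff e (G (b :: ρ)) =
        MvPowerSeries.coeff (e - Finsupp.single 0 1) (G ((b - 1) :: ρ)) := by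
  intro n
  induction n with
  | zero =>
      intro b ρ hb hl e he
      rw [strip_cons_pos (by omega : b ≠ 0)] at hl
      simp at hl
  | succ n ih =>
      intro b ρ hb hl e he
      obtain ⟨μ, hμ⟩ : ∃ μ, strip ρ = μ := ⟨_, rfl⟩
      have hμst : strip μ = μ := by rw [← hμ]; exact strip_idem ρ
      have hsb : strip (b :: ρ) = b :: μ := by
        rw [strip_cons_pos (by omega : b ≠ 0), hμ]
      have hlen : μ.length + 1 ≤ n + 1 := by
        rw [hsb] at hl; simpa using hl
      have hGb : G (b :: ρ) = G (b :: μ) := G_congr (by rw [strip_cons_strip b ρ, hμ])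
      have hGb1 : G ((b - 1) :: ρ) = G ((b - 1) :: μ) :=
        G_congr (by rw [strip_cons_strip (b - 1) ρ, hμ])
      rw [hGb, hGb1]
      by_cases h0 : 0 ∈ μ
      · -- recursive case: μ contains a zero
        have hμne : μ ≠ [] := by rintro rfl; simp at h0
        obtain ⟨γ, τ, hdec, hτ0, hτne, hG₁⟩ := Gaux_unfold_cons (c := b) hμst h0
        obtain ⟨γ₂, τ₂, hdec₂, hτ₂, hτne₂, hG₂⟩ := Gaux_unfold_cons (c := b - 1) hμst h0
        obtain ⟨rfl, rfl⟩ := decomp_unique (hdec.symm.trans hdec₂) hτ0 hτ₂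
        obtain ⟨a, β, rfl⟩ : ∃ a' β', τ = a' :: β' := by
          cases τ with
          | nil => exact absurd rfl hτne
          | cons a' β' => exact ⟨a', β', rfl⟩
        have hmlen : μ.length = γ.length + β.length + 2 := by
          rw [hdec]; simp only [List.length_append, List.length_cons]; omega
        have hGbμ : G (b :: μ) = G (b :: (γ ++ a :: β)) -
            MvPowerSeries.X (γ.length + 1) * G (b :: (γ ++ (a - 1) :: β)) := by
          show Gaux (strip (b :: μ)).length (b :: μ) = _
          rw [strip_cons_of_stripped hμst hμne b, List.length_cons,
            hG₁ μ.length (b :: μ) (strip_cons_of_stripped hμst hμne b)]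
          rw [Gaux_eq_G ((strip_length_le _).trans
            (by simp only [List.length_cons, List.length_append, List.tail_cons]; omega)),
            Gaux_eq_G ((strip_length_le _).trans
            (by simp only [List.length_cons, List.length_append, List.tail_cons]; omega))]
          rfl
        have hGb1μ : G ((b - 1) :: μ) = G ((b - 1) :: (γ ++ a :: β)) -
            MvPowerSeries.X (γ.length + 1) * G ((b - 1) :: (γ ++ (a - 1) :: β)) := by
          show Gaux (strip ((b - 1) :: μ)).length ((b - 1) :: μ) = _
          rw [strip_cons_of_stripped hμst hμne (b - 1), List.length_cons,
            hG₂ μ.length ((b - 1) :: μ) (strip_cons_of_stripped hμst hμne (b - 1))]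
          rw [Gaux_eq_G ((strip_length_le _).trans
            (by simp only [List.length_cons, List.length_append, List.tail_cons]; omega)),
            Gaux_eq_G ((strip_length_le _).trans
            (by simp only [List.length_cons, List.length_append, List.tail_cons]; omega))]
          rfl
        rw [hGbμ, hGb1μ, map_sub, map_sub, coeff_X_mul', coeff_X_mul']
        have hbound1 : (strip (b :: (γ ++ a :: β))).length ≤ n := by
          have := strip_length_le (b :: (γ ++ a :: β))
          simp only [List.length_cons, List.length_append] at this
          omega
        have hbound2 : (strip (b :: (γ ++ (a - 1) :: β))).length ≤ n := by
          have := strip_length_le (b :: (γ ++ (a - 1) :: β))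
          simp only [List.length_cons, List.length_append] at this
          omega
        rw [ih b (γ ++ a :: β) hb hbound1 e he]
        congr 1
        rw [sub_single_apply e (by omega : (0 : ℕ) ≠ γ.length + 1)]
        by_cases hek : 0 < e (γ.length + 1)
        · rw [if_pos hek, if_pos hek,
            ih b (γ ++ (a - 1) :: β) hb hbound2 (e - Finsupp.single (γ.length + 1) 1)
              (by rwa [sub_single_apply e (by omega : (γ.length + 1 : ℕ) ≠ 0)]),
            tsub_tsub, tsub_tsub, add_comm]
        · rw [if_neg hek, if_neg hek]
      · -- standard case: μ is zero-free
        have h0b : (0 : ℕ) ∉ b :: μ := by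
          intro hmem
          rcases List.mem_cons.mp hmem with h | h
          · omega
          · exact h0 h
        have hsbμ : strip (b :: μ) = b :: μ := strip_of_not_mem h0b
        have hGbF : G (b :: μ) = Fqs (b + μ.sum) (descents (b :: μ)) := by
          show Gaux (strip (b :: μ)).length (b :: μ) = _
          rw [Gaux_of_not_mem (by rw [hsbμ]; exact h0b), hsbμ, List.sum_cons]
        rcases Nat.lt_or_ge b 2 with hb2 | hb2
        · -- b = 1
          have hb1 : b = 1 := by omega
          subst hb1
          simp only [Nat.sub_self]
          cases μ with
          | nil =>
              have hstrip0 : strip ([0] : List ℕ) = [] := rfl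
              have hG0 : G ([0] : List ℕ) = Fqs 0 (descents ([] : List ℕ)) := by
                show Gaux (strip ([0] : List ℕ)).length [0] = _
                rw [Gaux_of_not_mem (by rw [hstrip0]; simp), hstrip0]
                rfl
              rw [hGbF, hG0, show (1 + List.sum [] : ℕ) = 0 + 1 by simp]
              apply coeff_Fqs_shift 0 _ _ ?_ e he ?_
              · intro p
                constructor
                · intro hmem
                  rw [mem_descents_cons] at hmem
                  obtain ⟨k, hk, hs⟩ := hmem
                  exact absurd hk (by simp)
                · intro hmem
                  rw [mem_descents] at hmem
                  obtain ⟨k, hk0, hkl, hs⟩ := hmem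
                  exact absurd hkl (by simp)
              · intro hmem
                rw [mem_descents_cons] at hmem
                obtain ⟨k, hk, hs⟩ := hmem
                exact absurd hk (by simp)
          | cons a β =>
              have ha : a ≠ 0 := fun h => h0 (h ▸ List.mem_cons_self)
              have hstrip0μ : strip ((0 : ℕ) :: a :: β) = 0 :: a :: β :=
                strip_cons_of_stripped hμst (by simp) 0
              obtain ⟨γ, τ, hdec, hτ0, hτne, hG⟩ :=
                Gaux_unfold_zero' hstrip0μ (List.mem_cons_self)
              obtain ⟨hγnil, hτμ⟩ := decomp_unique
                (γ₂ := []) (τ₂ := a :: β) (by simpa using hdec.symm) hτ0 h0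
              subst hγnil hτμ
              have hG0μ : G ((0 : ℕ) :: a :: β) =
                  G (a :: β) - MvPowerSeries.X 0 * G ((a - 1) :: β) := by
                show Gaux (strip ((0 : ℕ) :: a :: β)).length (0 :: a :: β) = _
                rw [hstrip0μ, List.length_cons,
                  hG (a :: β).length ((0 : ℕ) :: a :: β) hstrip0μ]
                simp only [List.nil_append, List.length_nil, List.headI, List.tail_cons]
                rw [Gaux_eq_G (by rw [hμst]),
                  Gaux_eq_G ((strip_length_le _).trans (by simp))]
              have hGaβ : G (a :: β) = Fqs ((a :: β).sum) (descents (a :: β)) := by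
                show Gaux (strip (a :: β)).length (a :: β) = _
                rw [Gaux_of_not_mem (by rw [hμst]; exact h0), hμst]
              rw [hGbF, hG0μ, map_sub, coeff_X_mul', sub_single_apply_self]
              by_cases he2 : 2 ≤ e 0
              · rw [if_pos (by omega : 0 < e 0 - 1)]
                rw [ih a β (by omega) (by rw [hμst]; simp only [List.length_cons] at hlen ⊢; omega)
                  (e - Finsupp.single 0 1) (by rw [sub_single_apply_self]; omega)]
                rw [sub_self, show (1 + (a :: β).sum : ℕ) = (a :: β).sum + 1 by omega]
                apply coeff_Fqs_zero
                · rw [mem_descents_cons]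
                  exact ⟨0, by simp, by simp⟩
                · exact he2
              · rw [if_neg (by omega : ¬ 0 < e 0 - 1), sub_zero, hGaβ,
                  show (1 + (a :: β).sum : ℕ) = (a :: β).sum + 1 by omega]
                apply coeff_Fqs_shift _ _ _ ?_ e he ?_
                · intro p
                  rw [mem_descents_cons, mem_descents]
                  constructor
                  · rintro ⟨k, hk, hs⟩
                    refine ⟨k, ?_, hk, by omega⟩
                    rcases Nat.eq_zero_or_pos k with rfl | hpos
                    · rw [List.take_zero, List.sum_nil] at hs; omega
                    · exact hpos
                  · rintro ⟨k, hk0, hkl, hs⟩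
                    exact ⟨k, hkl, by omega⟩
                · intro _
                  omega
        · -- b ≥ 2
          have h0b1 : (0 : ℕ) ∉ (b - 1) :: μ := by
            intro hmem
            rcases List.mem_cons.mp hmem with h | h
            · omega
            · exact h0 h
          have hsb1μ : strip ((b - 1) :: μ) = (b - 1) :: μ := strip_of_not_mem h0b1
          have hGb1F : G ((b - 1) :: μ) = Fqs ((b - 1) + μ.sum) (descents ((b - 1) :: μ)) := by
            show Gaux (strip ((b - 1) :: μ)).length ((b - 1) :: μ) = _
            rw [Gaux_of_not_mem (by rw [hsb1μ]; exact h0b1), hsb1μ, List.sum_cons]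
          rw [hGbF, hGb1F, show b + μ.sum = ((b - 1) + μ.sum) + 1 by omega]
          apply coeff_Fqs_shift _ _ _ ?_ e he ?_
          · intro p
            rw [mem_descents_cons, mem_descents_cons]
            constructor
            · rintro ⟨k, hk, hs⟩
              exact ⟨k, hk, by omega⟩
            · rintro ⟨k, hk, hs⟩
              exact ⟨k, hk, by omega⟩
          · intro hmem
            rw [mem_descents_cons] at hmem
            obtain ⟨k, hk, hs⟩ := hmem
            omega

/-- For every generalized composition `b·ρ̃` with `b > 0`, there is a formal power
series `M` not involving the variable `x₁` such that
`G_{b·ρ̃} = x₁ · G_{(b-1)·ρ̃} + M(x₂,x₃,…)`. -/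
theorem G_pos_cons (b : ℕ) (ρ : List ℕ) (hb : 0 < b) :
    ∃ M : MvPowerSeries ℕ ℚ,
      (∀ e : ℕ →₀ ℕ, e 0 ≠ 0 → MvPowerSeries.coeff e M = 0) ∧
      G (b :: ρ) = MvPowerSeries.X 0 * G ((b - 1) :: ρ) + M := by
  refine ⟨G (b :: ρ) - MvPowerSeries.X 0 * G ((b - 1) :: ρ), fun e he => ?_, by ring⟩
  rw [map_sub, coeff_X_mul', if_pos (Nat.pos_of_ne_zero he),
    key_shift (strip (b :: ρ)).length b ρ hb le_rfl e (Nat.pos_of_ne_zero he), sub_self]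
end
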